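/- Let c > 0, d > 0 and T > 0 be real numbers. Let D : ℝ → ℝ be differentiable on [0, T] with 0 < D(t) ≤ d/4 for all t ∈ [0, T], and suppose its derivative satisfies D'(t) ≤ c·D(t)·(1 + log(d/(4·D(t)))) for all t ∈ [0, T]. Then for all t ∈ [0, T], D(t) ≤ (d·e/4)·exp( log(4·D(0)/(d·e)) · exp(−c·t) ). -/

import Mathlib

/-- Osgood/log-Gronwall inequality: if `0 < D ≤ d/4` on `[0,T]` and
`D' ≤ c·D·(1 + log (d / (4 D)))`, then
`D t ≤ (d e / 4) · exp (log (4 D 0 / (d e)) · exp (−c t))` on `[0,T]`. -/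
theorem log_gronwall (c d T : ℝ) (hc : 0 < c) (hd : 0 < d) (hT : 0 < T)
    (D : ℝ → ℝ)
    (hdiff : ∀ t ∈ Set.Icc (0 : ℝ) T, DifferentiableAt ℝ D t)
    (hbound : ∀ t ∈ Set.Icc (0 : ℝ) T, 0 < D t ∧ D t ≤ d / 4)
    (hderiv : ∀ t ∈ Set.Icc (0 : ℝ) T,
      deriv D t ≤ c * D t * (1 + Real.log (d / (4 * D t)))) :
    ∀ t ∈ Set.Icc (0 : ℝ) T,
      D t ≤ d * Real.exp 1 / 4 *
        Real.exp (Real.log (4 * D 0 / (d * Real.exp 1)) * Real.exp (-c * t)) := by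
  intro t ht
  have hde : (0:ℝ) < d * Real.exp 1 := by positivity
  set K : ℝ := Real.log (4 / (d * Real.exp 1)) with hKdef
  have hKval : K = Real.log 4 - Real.log d - 1 := by
    rw [hKdef, Real.log_div (by norm_num) hde.ne', Real.log_mul hd.ne' (Real.exp_pos 1).ne',
      Real.log_exp]
    ring
  -- key identity: for x > 0, 1 + log (d/(4x)) = -(log x + K)
  have hident : ∀ x : ℝ, 0 < x → 1 + Real.log (d / (4 * x)) = -(Real.log x + K) := by
    intro x hx
    rw [Real.log_div hd.ne' (by positivity), Real.log_mul (by norm_num) hx.ne', hKval]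
    ring
  set f : ℝ → ℝ := fun s => (Real.log (D s) + K) * Real.exp (c * s) with hf
  have hfderiv : ∀ s ∈ Set.Icc (0:ℝ) T, HasDerivAt f
      (deriv D s / D s * Real.exp (c * s)
        + (Real.log (D s) + K) * (c * Real.exp (c * s))) s := by
    intro s hs
    have hDs := (hbound s hs).1
    have h1 : HasDerivAt D (deriv D s) s := (hdiff s hs).hasDerivAt
    have h2 : HasDerivAt (fun x => Real.log (D x) + K) (deriv D s / D s) s :=
      (h1.log hDs.ne').add_const K
    have h3 : HasDerivAt (fun x => Real.exp (c * x)) (c * Real.exp (c * s)) s := by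
      simpa [mul_comm, Function.comp_def] using (Real.hasDerivAt_exp (c * s)).comp s
        ((hasDerivAt_id s).const_mul c)
    exact h2.mul h3
  have hanti : AntitoneOn f (Set.Icc 0 T) := by
    apply antitoneOn_of_deriv_nonpos (convex_Icc 0 T)
    · intro s hs
      exact (hfderiv s hs).continuousAt.continuousWithinAt
    · intro s hs
      rw [interior_Icc] at hs
      exact (hfderiv s (Set.mem_Icc_of_Ioo hs)).differentiableAt.differentiableWithinAt
    · intro s hs
      rw [interior_Icc] at hs
      have hs' := Set.mem_Icc_of_Ioo hs
      rw [(hfderiv s hs').deriv]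
      have hDs := (hbound s hs').1
      have hD' : deriv D s / D s ≤ -(c * (Real.log (D s) + K)) := by
        rw [div_le_iff₀ hDs]
        have := hderiv s hs'
        rw [hident (D s) hDs] at this
        nlinarith
      have hexp : (0:ℝ) < Real.exp (c * s) := Real.exp_pos _
      nlinarith [hexp]
  have h0 : (0:ℝ) ∈ Set.Icc (0:ℝ) T := ⟨le_refl 0, hT.le⟩
  have hft : f t ≤ f 0 := hanti h0 ht ht.1
  have hexpct : (0:ℝ) < Real.exp (c * t) := Real.exp_pos _
  have hstep : Real.log (D t) + K ≤ (Real.log (D 0) + K) * Real.exp (-c * t) := by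
    have h1 : (Real.log (D t) + K) * Real.exp (c * t) ≤ (Real.log (D 0) + K) * 1 := by
      simpa [hf, mul_zero, Real.exp_zero] using hft
    have h2 : Real.log (D t) + K
        = (Real.log (D t) + K) * Real.exp (c * t) * Real.exp (-c * t) := by
      rw [mul_assoc, ← Real.exp_add]
      simp
    rw [h2]
    have : (0:ℝ) < Real.exp (-c * t) := Real.exp_pos _
    nlinarith
  have hD0 := (hbound 0 h0).1
  have hDt := (hbound t ht).1
  have hlog0 : Real.log (4 * D 0 / (d * Real.exp 1)) = Real.log (D 0) + K := by
    rw [Real.log_div (by positivity) hde.ne', Real.log_mul (by norm_num) hD0.ne', hKval,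
      Real.log_mul hd.ne' (Real.exp_pos 1).ne', Real.log_exp]
    ring
  have hDteq : D t = d * Real.exp 1 / 4 * Real.exp (Real.log (D t) + K) := by
    rw [Real.exp_add, Real.exp_log hDt, hKdef, Real.exp_log (by positivity)]
    field_simp
  rw [hDteq, hlog0]
  have := Real.exp_le_exp.mpr hstep
  nlinarith [this, hde]
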